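/- Let X be standard exponentially distributed (c.d.f. F(x) = 1 − e^{−x} for x ≥ 0). For p ∈ (0, 0.5], the probability for a right p-outside value equals p_{R,p}(X) = (1−p)·(p/(1−p))^{1/p}. In particular p_{R,0.25}(X) = 1/108. -/

import Mathlib

open Set MeasureTheory

lemma key_exp_lemma (μ : Measure ℝ) [IsProbabilityMeasure μ]
    (hF : ∀ x : ℝ, (μ (Iic x)).toReal = if 0 ≤ x then 1 - Real.exp (-x) else 0)
    (p : ℝ) (hp : p ∈ Ioc (0:ℝ) (1/2)) :
    (μ (Ioi ((1/p) * (-Real.log p) - ((1 - p)/p) * (-Real.log (1 - p))))).toReal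
      = (1 - p) * (p / (1 - p)) ^ (1/p) := by
  obtain ⟨hp0, hp2⟩ := hp
  have h1p : (0:ℝ) < 1 - p := by linarith
  set R : ℝ := (1/p) * (-Real.log p) - ((1 - p)/p) * (-Real.log (1 - p)) with hRdef
  have hlog1 : 1 - (1-p)⁻¹ ≤ Real.log (1-p) := Real.one_sub_inv_le_log_of_pos h1p
  have hlog1' : -p ≤ (1-p) * Real.log (1-p) := by
    have := mul_le_mul_of_nonneg_left hlog1 h1p.le
    have h : (1-p) * (1 - (1-p)⁻¹) = -p := by field_simp; ring
    linarith [h ▸ this]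
  have hlogp : Real.log p ≤ -p := by
    rw [Real.log_le_iff_le_exp hp0]
    have := Real.add_one_le_exp (-p)
    linarith
  have hReq : R = (-Real.log p + (1-p) * Real.log (1-p)) / p := by
    rw [hRdef]; field_simp; ring
  have hR : 0 ≤ R := by
    rw [hReq]
    apply div_nonneg _ hp0.le
    linarith
  have hcompl : (μ (Ioi R)).toReal = 1 - (μ (Iic R)).toReal := by
    rw [← compl_Iic, measure_compl measurableSet_Iic (measure_ne_top _ _), measure_univ,
      ENNReal.toReal_sub_of_le prob_le_one ENNReal.one_ne_top, ENNReal.toReal_one]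
  rw [hcompl, hF R, if_pos hR]
  have : Real.exp (-R) = (1 - p) * (p / (1 - p)) ^ (1/p) := by
    rw [Real.rpow_def_of_pos (div_pos hp0 h1p), Real.log_div hp0.ne' h1p.ne',
      ← Real.exp_log h1p, ← Real.exp_add]
    congr 1
    rw [hRdef]
    field_simp
    simp only [Real.log_exp]
    ring
  linarith [this]

theorem exponential_right_outside_prob
    (μ : Measure ℝ) [IsProbabilityMeasure μ]
    (hF : ∀ x : ℝ, (μ (Iic x)).toReal = if 0 ≤ x then 1 - Real.exp (-x) else 0)
    (p : ℝ) (hp : p ∈ Ioc (0:ℝ) (1/2)) :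
    (μ (Ioi ((1/p) * (-Real.log p) - ((1 - p)/p) * (-Real.log (1 - p))))).toReal
      = (1 - p) * (p / (1 - p)) ^ (1/p) ∧
    (μ (Ioi ((1/(1/4:ℝ)) * (-Real.log (1/4))
        - ((1 - (1/4:ℝ))/(1/4)) * (-Real.log (1 - (1/4:ℝ)))))).toReal = 1/108 := by
  refine ⟨key_exp_lemma μ hF p hp, ?_⟩
  have h := key_exp_lemma μ hF (1/4) (by constructor <;> norm_num)
  rw [h]
  have h4 : (1:ℝ)/(1/4) = ((4:ℕ):ℝ) := by norm_num
  rw [h4, Real.rpow_natCast]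
  norm_num
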